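/- If R and S are infinitesimally-close points of a generic configuration P, then the configurations P∖{R} and P∖{S} are isotopic (in particular, orientedly isomorphic: the bijection sending S to R and fixing all other points preserves the orientation of every triple). -/

import Mathlib

open scoped Classical

noncomputable section

/-- Orientation determinant of two vectors in the plane. -/
def det2 (u v : ℝ × ℝ) : ℝ := u.1 * v.2 - u.2 * v.1

/-- The line through `A` and `B` separates the points `P` and `Q`
(they lie in distinct open half-planes determined by the line). -/
def SepLine (A B P Q : ℝ × ℝ) : Prop :=
  det2 (B - A) (P - A) * det2 (B - A) (Q - A) < 0

/-- A finite planar point set is a generic configuration if no three of its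
points are collinear. -/
def Generic (C : Finset (ℝ × ℝ)) : Prop :=
  ∀ a ∈ C, ∀ b ∈ C, ∀ c ∈ C, a ≠ b → a ≠ c → b ≠ c →
    ¬ Collinear ℝ ({a, b, c} : Set (ℝ × ℝ))

/-- `nsep C P Q` is the number of lines spanned by (unordered) pairs of points of
`C \ {P,Q}` that separate `P` from `Q`. -/
def nsep (C : Finset (ℝ × ℝ)) (P Q : ℝ × ℝ) : ℕ :=
  (((C \ {P, Q}).powersetCard 2).filter
    (fun s => ∃ A ∈ s, ∃ B ∈ s, A ≠ B ∧ SepLine A B P Q)).card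

/-- The Orchard relation: `P ∼ Q` iff `n(P,Q) ≡ n - 3 (mod 2)` where `n = |C|`. -/
def Orchard (C : Finset (ℝ × ℝ)) (P Q : ℝ × ℝ) : Prop :=
  (nsep C P Q : ℤ) ≡ (C.card : ℤ) - 3 [ZMOD 2]

/-- A configuration is monochromatic if all its points are Orchard-equivalent. -/
def Mono (C : Finset (ℝ × ℝ)) : Prop :=
  ∀ P ∈ C, ∀ Q ∈ C, P ≠ Q → Orchard C P Q

/-- A configuration is in convex position if each of its points is a vertex of
the convex hull. -/
def ConvexPos (C : Finset (ℝ × ℝ)) : Prop :=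
  ∀ P ∈ C, P ∉ convexHull ℝ ((C : Set (ℝ × ℝ)) \ {P})

lemma collinear_of_det2 (a b c : ℝ × ℝ) (h : det2 (b - a) (c - a) = 0) :
    Collinear ℝ ({a, b, c} : Set (ℝ × ℝ)) := by
  rcases eq_or_ne b a with hb | hb
  · subst hb
    simpa [Set.insert_comm, Set.pair_comm] using (collinear_pair ℝ c b)
  · rw [collinear_iff_of_mem (Set.mem_insert a {b, c})]
    refine ⟨b - a, fun p hp => ?_⟩
    have hdet : (b.1 - a.1) * (c.2 - a.2) - (b.2 - a.2) * (c.1 - a.1) = 0 := by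
      simpa [det2, Prod.fst_sub, Prod.snd_sub] using h
    rcases hp with rfl | rfl | hp
    · exact ⟨0, by simp⟩
    · exact ⟨1, by simp⟩
    · have hpc : p = c := hp
      subst hpc
      rcases eq_or_ne (b.1 - a.1) 0 with h1 | h1
      · have h2 : b.2 - a.2 ≠ 0 := by
          intro h2
          exact hb (by apply Prod.ext <;> [linarith; linarith])
        refine ⟨(p.2 - a.2) / (b.2 - a.2), ?_⟩
        rw [Prod.ext_iff]
        constructor
        · simp only [vadd_eq_add, Prod.smul_fst, Prod.fst_add, Prod.fst_sub, smul_eq_mul]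
          field_simp
          linear_combination -hdet
        · simp only [vadd_eq_add, Prod.smul_snd, Prod.snd_add, Prod.snd_sub, smul_eq_mul]
          field_simp
          ring
      · refine ⟨(p.1 - a.1) / (b.1 - a.1), ?_⟩
        rw [Prod.ext_iff]
        constructor
        · simp only [vadd_eq_add, Prod.smul_fst, Prod.fst_add, Prod.fst_sub, smul_eq_mul]
          field_simp
          ring
        · simp only [vadd_eq_add, Prod.smul_snd, Prod.snd_add, Prod.snd_sub, smul_eq_mul]
          field_simp
          linear_combination hdet

lemma pos_iff_of_mul_pos {a b : ℝ} (h : 0 < a * b) : 0 < a ↔ 0 < b := by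
  constructor <;> intro h' <;> nlinarith

theorem infinitesimal_contraction_oriented_iso (C : Finset (ℝ × ℝ)) (hC : Generic C)
    (R S : ℝ × ℝ) (hR : R ∈ C) (hS : S ∈ C) (hRS : R ≠ S)
    (hclose : nsep C R S = 0) :
    Set.BijOn (fun X => if X = S then R else X)
        ((C : Set (ℝ × ℝ)) \ {R}) ((C : Set (ℝ × ℝ)) \ {S}) ∧
    ∀ X ∈ (C : Set (ℝ × ℝ)) \ {R}, ∀ Y ∈ (C : Set (ℝ × ℝ)) \ {R},
      ∀ Z ∈ (C : Set (ℝ × ℝ)) \ {R}, X ≠ Y → X ≠ Z → Y ≠ Z →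
      (0 < det2 (Y - X) (Z - X) ↔
        0 < det2 ((if Y = S then R else Y) - (if X = S then R else X))
               ((if Z = S then R else Z) - (if X = S then R else X))) := by
  have hnosep : ∀ P ∈ C, ∀ Q ∈ C, P ≠ R → P ≠ S → Q ≠ R → Q ≠ S → P ≠ Q →
      0 < det2 (Q - P) (R - P) * det2 (Q - P) (S - P) := by
    intro P hP Q hQ hPR hPS hQR hQS hPQ
    have hmem : ({P, Q} : Finset (ℝ × ℝ)) ∈ (C \ {R, S}).powersetCard 2 := by
      rw [Finset.mem_powersetCard]
      refine ⟨?_, ?_⟩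
      · intro x hx
        rcases Finset.mem_insert.mp hx with rfl | hx
        · simp [Finset.mem_sdiff, hP, hPR, hPS]
        · rw [Finset.mem_singleton] at hx
          subst hx
          simp [Finset.mem_sdiff, hQ, hQR, hQS]
      · rw [Finset.card_insert_of_notMem (by simp [hPQ]), Finset.card_singleton]
    have hempty : (((C \ {R, S}).powersetCard 2).filter
        (fun s => ∃ A ∈ s, ∃ B ∈ s, A ≠ B ∧ SepLine A B R S)) = ∅ :=
      Finset.card_eq_zero.mp hclose
    have hns : ¬ SepLine P Q R S := by
      intro hsep
      have hin : ({P, Q} : Finset (ℝ × ℝ)) ∈ (((C \ {R, S}).powersetCard 2).filter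
          (fun s => ∃ A ∈ s, ∃ B ∈ s, A ≠ B ∧ SepLine A B R S)) :=
        Finset.mem_filter.mpr ⟨hmem, ⟨P, by simp, Q, by simp, hPQ, hsep⟩⟩
      rw [hempty] at hin
      exact absurd hin (Finset.notMem_empty _)
    have h1 : det2 (Q - P) (R - P) ≠ 0 := fun h0 =>
      hC P hP Q hQ R hR hPQ hPR hQR (collinear_of_det2 P Q R h0)
    have h2 : det2 (Q - P) (S - P) ≠ 0 := fun h0 =>
      hC P hP Q hQ S hS hPQ hPS hQS (collinear_of_det2 P Q S h0)
    have hge : 0 ≤ det2 (Q - P) (R - P) * det2 (Q - P) (S - P) := not_lt.mp hns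
    exact lt_of_le_of_ne hge (Ne.symm (mul_ne_zero h1 h2))
  constructor
  · refine ⟨?_, ?_, ?_⟩
    · rintro X ⟨hXC, hXR⟩
      by_cases hXS : X = S
      · simp only [hXS, if_pos rfl]
        exact ⟨hR, hRS⟩
      · simp only [if_neg hXS]
        exact ⟨hXC, hXS⟩
    · rintro X ⟨hXC, hXR⟩ Y ⟨hYC, hYR⟩ hXY
      simp only [Set.mem_singleton_iff] at hXR hYR
      by_cases hXS : X = S
      · by_cases hYS : Y = S
        · rw [hXS, hYS]
        · simp only [if_pos hXS, if_neg hYS] at hXY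
          exact absurd hXY.symm hYR
      · by_cases hYS : Y = S
        · simp only [if_neg hXS, if_pos hYS] at hXY
          exact absurd hXY hXR
        · simpa only [if_neg hXS, if_neg hYS] using hXY
    · rintro Y ⟨hYC, hYS⟩
      simp only [Set.mem_singleton_iff] at hYS
      by_cases hYR : Y = R
      · exact ⟨S, ⟨hS, fun h => hRS h.symm⟩, by simp [hYR]⟩
      · exact ⟨Y, ⟨hYC, hYR⟩, by simp [hYS]⟩
  · rintro X ⟨hXC, hXR⟩ Y ⟨hYC, hYR⟩ Z ⟨hZC, hZR⟩ hXY hXZ hYZ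
    simp only [Set.mem_singleton_iff] at hXR hYR hZR
    by_cases hXS : X = S
    · have hYS : Y ≠ S := fun h => hXY (hXS ▸ h ▸ rfl)
      have hZS : Z ≠ S := fun h => hXZ (hXS ▸ h ▸ rfl)
      subst hXS
      simp only [if_pos rfl, eq_self_iff_true, if_true, if_neg hYS, if_neg hZS]
      have key := hnosep Y hYC Z hZC hYR hYS hZR hZS hYZ
      have e1 : det2 (Y - X) (Z - X) = det2 (Z - Y) (X - Y) := by
        simp only [det2, Prod.fst_sub, Prod.snd_sub]; ring
      have e2 : det2 (Y - R) (Z - R) = det2 (Z - Y) (R - Y) := by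
        simp only [det2, Prod.fst_sub, Prod.snd_sub]; ring
      rw [e1, e2]
      exact (pos_iff_of_mul_pos key).symm
    · by_cases hYS : Y = S
      · have hZS : Z ≠ S := fun h => hYZ (hYS ▸ h ▸ rfl)
        subst hYS
        simp only [if_pos rfl, eq_self_iff_true, if_true, if_neg hXS, if_neg hZS]
        have key := hnosep X hXC Z hZC hXR hXS hZR hZS hXZ
        have key2 : 0 < det2 (Y - X) (Z - X) * det2 (R - X) (Z - X) := by
          have e : det2 (Y - X) (Z - X) * det2 (R - X) (Z - X)
              = det2 (Z - X) (R - X) * det2 (Z - X) (Y - X) := by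
            simp only [det2, Prod.fst_sub, Prod.snd_sub]; ring
          rw [e]; exact key
        exact pos_iff_of_mul_pos key2
      · by_cases hZS : Z = S
        · subst hZS
          simp only [if_pos rfl, eq_self_iff_true, if_true, if_neg hXS, if_neg hYS]
          have key := hnosep X hXC Y hYC hXR hXS hYR hYS hXY
          have key2 : 0 < det2 (Y - X) (Z - X) * det2 (Y - X) (R - X) := by
            have e : det2 (Y - X) (Z - X) * det2 (Y - X) (R - X)
                = det2 (Y - X) (R - X) * det2 (Y - X) (Z - X) := by ring
            rw [e]; exact key
          exact pos_iff_of_mul_pos key2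
        · simp only [if_neg hXS, if_neg hYS, if_neg hZS]
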